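/- For every integer k ≥ 2, all probability measures F₁, …, F_k on a measurable space (𝒳, 𝒜), and all β, β̄ ∈ 𝒲_k, one has h(∑_{i=1}^k βᵢ Fᵢ, ∑_{i=1}^k β̄ᵢ Fᵢ) ≥ (Δ*(F₁,…,F_k) / (2√2)) ‖β − β̄‖₁, where Δ*(F₁,…,F_k) = inf over nonempty proper subsets I ⊊ [k], γ ∈ 𝒲_{|I|} and λ ∈ 𝒲_{k−|I|} of d_TV(∑_{i∈I} γᵢ Fᵢ, ∑_{i∈[k]∖I} λᵢ Fᵢ). -/

import Mathlib

open MeasureTheory Real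
open scoped ENNReal

noncomputable section

variable {𝒳 : Type*} [MeasurableSpace 𝒳]

/-- Squared Hellinger distance between two measures. -/
def hellingerSq (P Q : Measure 𝒳) : ℝ :=
  (1 / 2) * ∫ x, (Real.sqrt ((P.rnDeriv (P + Q) x).toReal)
      - Real.sqrt ((Q.rnDeriv (P + Q) x).toReal)) ^ 2 ∂(P + Q)

/-- Hellinger distance between two measures. -/
def hellinger (P Q : Measure 𝒳) : ℝ := Real.sqrt (hellingerSq P Q)

/-- Hellinger distance between two weight vectors. -/
def hellingerVec {k : ℕ} (w w' : Fin k → ℝ) : ℝ :=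
  Real.sqrt ((1 / 2) * ∑ i, (Real.sqrt (w i) - Real.sqrt (w' i)) ^ 2)

/-- Total variation distance. -/
def tvDist (P Q : Measure 𝒳) : ℝ :=
  ⨆ s : { s : Set 𝒳 // MeasurableSet s }, |(P s.1).toReal - (Q s.1).toReal|

/-- Mixture of measures with real weights. -/
def mix {k : ℕ} (β : Fin k → ℝ) (Q : Fin k → Measure 𝒳) : Measure 𝒳 :=
  ∑ i, ENNReal.ofReal (β i) • Q i

/-- Linear independence of finite measures, viewed in the real vector space of
finite signed measures: the only real linear combination vanishing on every
measurable set is the trivial one. -/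
def MeasLinIndep {k : ℕ} (F : Fin k → Measure 𝒳) : Prop :=
  ∀ c : Fin k → ℝ, (∀ s : Set 𝒳, MeasurableSet s → ∑ i, c i * (F i s).toReal = 0) → c = 0

/-- The constant Δ*(F₁,…,F_k). -/
def Δstar {k : ℕ} (F : Fin k → Measure 𝒳) : ℝ :=
  ⨅ I : { I : Finset (Fin k) // I.Nonempty ∧ I ≠ Finset.univ },
    ⨅ γ : { γ : Fin k → ℝ // (∀ i, 0 ≤ γ i) ∧ ∑ i ∈ I.1, γ i = 1 },
      ⨅ l : { l : Fin k → ℝ // (∀ i, 0 ≤ l i) ∧ ∑ i ∈ I.1ᶜ, l i = 1 },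
        tvDist (∑ i ∈ I.1, ENNReal.ofReal (γ.1 i) • F i)
          (∑ i ∈ I.1ᶜ, ENNReal.ofReal (l.1 i) • F i)

/-- ψ(√r) where ψ(x) = (x−1)/(x+1), with ψ(√∞) = 1. -/
def ψρ (r : ℝ≥0∞) : ℝ :=
  if r = ⊤ then 1 else (Real.sqrt r.toReal - 1) / (Real.sqrt r.toReal + 1)

/-- Ratio b/a in [0,∞] with conventions 0/0 = 1 and a/0 = ∞ for a > 0. -/
def densRatio (a b : ℝ) : ℝ≥0∞ :=
  if a = 0 ∧ b = 0 then 1 else ENNReal.ofReal b / ENNReal.ofReal a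

/-- The statistic T(x,q,q') = ∑ᵢ ψ(√(q'(xᵢ)/q(xᵢ))). -/
def Tρ {n : ℕ} (x : Fin n → 𝒳) (q q' : 𝒳 → ℝ) : ℝ :=
  ∑ i, ψρ (densRatio (q (x i)) (q' (x i)))

/-- The rational points of the simplex, 𝒲_k ∩ ℚ^k. -/
def ratSimplex (k : ℕ) : Set (Fin k → ℝ) :=
  { β | β ∈ stdSimplex ℝ (Fin k) ∧ ∀ i, ∃ r : ℚ, β i = (r : ℝ) }

/-- Mixture density ∑ⱼ βⱼ qⱼ. -/
def mixDens {k : ℕ} (q : Fin k → 𝒳 → ℝ) (β : Fin k → ℝ) : 𝒳 → ℝ :=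
  fun x => ∑ j, β j * q j x

/-- Υ(x,p) = sup over the model ℳ_mix(q₁,…,q_k) of T(x,p,·). -/
def Υρ {n k : ℕ} (q : Fin k → 𝒳 → ℝ) (x : Fin n → 𝒳) (p : 𝒳 → ℝ) : ℝ :=
  ⨆ β : ratSimplex k, Tρ x p (mixDens q β.1)

/-- The set 𝓔(x) of candidate ρ-estimators on the model ℳ_mix(q₁,…,q_k). -/
def rhoEstSet {n k : ℕ} (μ : Measure 𝒳) (q : Fin k → 𝒳 → ℝ) (x : Fin n → 𝒳) :
    Set (Measure 𝒳) :=
  { P | ∃ β ∈ ratSimplex k,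
      P = μ.withDensity (fun y => ENNReal.ofReal (mixDens q β y)) ∧
      Υρ q x (mixDens q β) < (⨅ β' : ratSimplex k, Υρ q x (mixDens q β'.1)) + 11.36 }

/-- Closure of a set of measures with respect to the Hellinger distance. -/
def hellClosure (S : Set (Measure 𝒳)) : Set (Measure 𝒳) :=
  { P | ∀ ε > 0, ∃ Q ∈ S, hellinger P Q < ε }

/-- The Bayes predictor associated with weights α and densities q. -/
def bayesPred {k : ℕ} (α : Fin k → ℝ) (q : Fin k → 𝒳 → ℝ) : 𝒳 → Fin k → ℝ :=
  fun x i => α i * q i x / ∑ j, α j * q j x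

/-- The joint distribution Π*_α on 𝒳 × [k] with ℙ(Y = i) = αᵢ and law of X given
Y = i equal to Q i. -/
def jointLaw {k : ℕ} (α : Fin k → ℝ) (Q : Fin k → Measure 𝒳) : Measure (𝒳 × Fin k) :=
  ∑ i, ENNReal.ofReal (α i) • ((Q i).prod (Measure.dirac i))

/-- Marginal calibration: fᵢ(X) = 𝔼[1_{Y=i} | fᵢ(X)] a.s. for all i. -/
def MarginallyCalibrated {k : ℕ} (f : 𝒳 → Fin k → ℝ) (Pm : Measure (𝒳 × Fin k)) : Prop :=
  ∀ i, (fun ω : 𝒳 × Fin k => f ω.1 i)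
    =ᵐ[Pm] Pm[(fun ω : 𝒳 × Fin k => if ω.2 = i then (1 : ℝ) else 0) |
        MeasurableSpace.comap (fun ω : 𝒳 × Fin k => f ω.1 i) inferInstance]

/-- Canonical calibration: fᵢ(X) = 𝔼[1_{Y=i} | f(X)] a.s. for all i. -/
def CanonicallyCalibrated {k : ℕ} (f : 𝒳 → Fin k → ℝ) (Pm : Measure (𝒳 × Fin k)) : Prop :=
  ∀ i, (fun ω : 𝒳 × Fin k => f ω.1 i)
    =ᵐ[Pm] Pm[(fun ω : 𝒳 × Fin k => if ω.2 = i then (1 : ℝ) else 0) |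
        MeasurableSpace.comap (fun ω : 𝒳 × Fin k => f ω.1) inferInstance]

open scoped Classical in
/-- Kullback–Leibler divergence. -/
def klDiv' (P Q : Measure 𝒳) : EReal :=
  if P ≪ Q ∧ Integrable (fun x => Real.log ((P.rnDeriv Q x).toReal)) P
  then ((∫ x, Real.log ((P.rnDeriv Q x).toReal) ∂P : ℝ) : EReal)
  else ⊤

end

section

variable {𝒳 : Type*} [MeasurableSpace 𝒳]

lemma tvDist_nonneg (P Q : Measure 𝒳) : 0 ≤ tvDist P Q :=
  Real.iSup_nonneg fun _ => abs_nonneg _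

lemma tvDist_le_sqrt_two_mul_hellinger (P Q : Measure 𝒳)
    [IsProbabilityMeasure P] [IsProbabilityMeasure Q] :
    tvDist P Q ≤ Real.sqrt 2 * hellinger P Q := by
  set ν : Measure 𝒳 := P + Q with hν
  have hPν : P ≪ ν := Measure.absolutelyContinuous_of_le (Measure.le_add_right le_rfl)
  have hQν : Q ≪ ν := Measure.absolutelyContinuous_of_le (Measure.le_add_left le_rfl)
  set p : 𝒳 → ℝ := fun x => (P.rnDeriv ν x).toReal with hp
  set q : 𝒳 → ℝ := fun x => (Q.rnDeriv ν x).toReal with hq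
  have hpm : Measurable p := (Measure.measurable_rnDeriv P ν).ennreal_toReal
  have hqm : Measurable q := (Measure.measurable_rnDeriv Q ν).ennreal_toReal
  have hpint : Integrable p ν := Measure.integrable_toReal_rnDeriv
  have hqint : Integrable q ν := Measure.integrable_toReal_rnDeriv
  have hp0 : ∀ x, 0 ≤ p x := fun x => ENNReal.toReal_nonneg
  have hq0 : ∀ x, 0 ≤ q x := fun x => ENNReal.toReal_nonneg
  have hip : ∫ x, p x ∂ν = 1 := by
    rw [hp, Measure.integral_toReal_rnDeriv hPν]; simp
  have hiq : ∫ x, q x ∂ν = 1 := by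
    rw [hq, Measure.integral_toReal_rnDeriv hQν]; simp
  set f : 𝒳 → ℝ := fun x => |Real.sqrt (p x) - Real.sqrt (q x)| with hf
  set g : 𝒳 → ℝ := fun x => Real.sqrt (p x) + Real.sqrt (q x) with hg
  have hfm : Measurable f := ((hpm.sqrt.sub hqm.sqrt)).abs
  have hgm : Measurable g := hpm.sqrt.add hqm.sqrt
  have hfsq : ∀ x, f x ^ 2 ≤ p x + q x := by
    intro x
    have h1 := Real.sq_sqrt (hp0 x); have h2 := Real.sq_sqrt (hq0 x)
    have h3 := Real.sqrt_nonneg (p x); have h4 := Real.sqrt_nonneg (q x)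
    rw [hf]; simp only [sq_abs]; nlinarith
  have hgsq : ∀ x, g x ^ 2 ≤ 2 * (p x + q x) := by
    intro x
    have h1 := Real.sq_sqrt (hp0 x); have h2 := Real.sq_sqrt (hq0 x)
    have h3 := Real.sqrt_nonneg (p x); have h4 := Real.sqrt_nonneg (q x)
    simp only [hg]; nlinarith [sq_nonneg (Real.sqrt (p x) - Real.sqrt (q x))]
  have hpq_int : Integrable (fun x => p x + q x) ν := hpint.add hqint
  have hfsq_int : Integrable (fun x => f x ^ 2) ν := by
    refine Integrable.mono hpq_int (hfm.pow_const 2).aestronglyMeasurable ?_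
    filter_upwards with x
    rw [Real.norm_eq_abs, Real.norm_eq_abs, abs_of_nonneg (sq_nonneg _),
      abs_of_nonneg (by positivity : (0:ℝ) ≤ p x + q x)]
    exact hfsq x
  have hgsq_int : Integrable (fun x => g x ^ 2) ν := by
    refine Integrable.mono (hpq_int.const_mul 2) (hgm.pow_const 2).aestronglyMeasurable ?_
    filter_upwards with x
    rw [Real.norm_eq_abs, Real.norm_eq_abs, abs_of_nonneg (sq_nonneg _),
      abs_of_nonneg (by positivity : (0:ℝ) ≤ 2 * (p x + q x))]
    exact hgsq x
  have hconj : (2:ℝ).HolderConjugate 2 := ⟨by norm_num, by norm_num, by norm_num⟩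
  have hof2 : ENNReal.ofReal (2:ℝ) = 2 := by norm_num
  have hfL2 : MemLp f (ENNReal.ofReal (2:ℝ)) ν := by
    rw [hof2]; exact (memLp_two_iff_integrable_sq hfm.aestronglyMeasurable).mpr hfsq_int
  have hgL2 : MemLp g (ENNReal.ofReal (2:ℝ)) ν := by
    rw [hof2]; exact (memLp_two_iff_integrable_sq hgm.aestronglyMeasurable).mpr hgsq_int
  have holder := integral_mul_le_Lp_mul_Lq_of_nonneg hconj
    (Filter.Eventually.of_forall fun x => abs_nonneg _)
    (Filter.Eventually.of_forall fun x => by positivity) hfL2 hgL2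
  have hrpow : ∀ h : 𝒳 → ℝ, (∫ a, h a ^ (2:ℝ) ∂ν) ^ (1/(2:ℝ)) = Real.sqrt (∫ a, h a ^ 2 ∂ν) := by
    intro h
    have h2 : ∀ y : ℝ, y ^ (2:ℝ) = y ^ (2:ℕ) := fun y => by
      rw [← Real.rpow_natCast y 2]; norm_num
    rw [Real.sqrt_eq_rpow]
    congr 1
    exact integral_congr_ae (Filter.Eventually.of_forall fun x => h2 (h x))
  rw [hrpow f, hrpow g] at holder
  -- ∫ g² ≤ 4
  have hg4 : ∫ a, g a ^ 2 ∂ν ≤ 4 := by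
    calc ∫ a, g a ^ 2 ∂ν ≤ ∫ a, 2 * (p a + q a) ∂ν :=
          integral_mono hgsq_int (hpq_int.const_mul 2) hgsq
      _ = 4 := by rw [integral_const_mul, integral_add hpint hqint, hip, hiq]; norm_num
  have hgsqrt : Real.sqrt (∫ a, g a ^ 2 ∂ν) ≤ 2 := by
    calc Real.sqrt (∫ a, g a ^ 2 ∂ν) ≤ Real.sqrt 4 := Real.sqrt_le_sqrt hg4
      _ = 2 := by rw [show (4:ℝ) = 2^2 by norm_num, Real.sqrt_sq (by norm_num)]
  have hfhell : Real.sqrt (∫ a, f a ^ 2 ∂ν) = Real.sqrt 2 * hellinger P Q := by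
    have : ∫ a, f a ^ 2 ∂ν = 2 * hellingerSq P Q := by
      rw [hellingerSq, ← hν]
      rw [show (2:ℝ) * ((1/2) * ∫ x, (Real.sqrt (p x) - Real.sqrt (q x)) ^ 2 ∂ν)
            = ∫ x, (Real.sqrt (p x) - Real.sqrt (q x)) ^ 2 ∂ν by ring]
      refine integral_congr_ae (Filter.Eventually.of_forall fun x => ?_)
      rw [hf]; simp [sq_abs]
    rw [this, Real.sqrt_mul (by norm_num), hellinger]
  have key : ∫ a, f a * g a ∂ν ≤ Real.sqrt 2 * hellinger P Q * 2 := by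
    calc ∫ a, f a * g a ∂ν ≤ Real.sqrt (∫ a, f a ^ 2 ∂ν) * Real.sqrt (∫ a, g a ^ 2 ∂ν) := holder
      _ ≤ Real.sqrt (∫ a, f a ^ 2 ∂ν) * 2 := by
          refine mul_le_mul_of_nonneg_left hgsqrt (Real.sqrt_nonneg _)
      _ = Real.sqrt 2 * hellinger P Q * 2 := by rw [hfhell]
  have hfg : ∀ x, f x * g x = |p x - q x| := by
    intro x
    simp only [hf, hg]
    rw [← abs_of_nonneg (by positivity : (0:ℝ) ≤ Real.sqrt (p x) + Real.sqrt (q x)),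
      ← abs_mul]
    congr 1
    have h1 := Real.sq_sqrt (hp0 x); have h2 := Real.sq_sqrt (hq0 x)
    nlinarith [Real.sqrt_nonneg (p x), Real.sqrt_nonneg (q x)]
  have key2 : ∫ a, |p a - q a| ∂ν ≤ Real.sqrt 2 * hellinger P Q * 2 := by
    have heq : ∫ a, |p a - q a| ∂ν = ∫ a, f a * g a ∂ν :=
      integral_congr_ae (Filter.Eventually.of_forall fun x => (hfg x).symm)
    rw [heq]; exact key
  -- per-set bound
  refine Real.iSup_le (fun s => ?_)
    (mul_nonneg (Real.sqrt_nonneg _) (Real.sqrt_nonneg _))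
  obtain ⟨s, hs⟩ := s
  have hd_int : Integrable (fun x => p x - q x) ν := hpint.sub hqint
  have hd0 : ∫ x, (p x - q x) ∂ν = 0 := by rw [integral_sub hpint hqint, hip, hiq]; ring
  have hPs : (P s).toReal = ∫ x in s, p x ∂ν := (Measure.setIntegral_toReal_rnDeriv hPν s).symm
  have hQs : (Q s).toReal = ∫ x in s, q x ∂ν := (Measure.setIntegral_toReal_rnDeriv hQν s).symm
  have hsub : (P s).toReal - (Q s).toReal = ∫ x in s, (p x - q x) ∂ν := by
    rw [hPs, hQs, integral_sub hpint.integrableOn hqint.integrableOn]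
  have hcompl : ∫ x in sᶜ, (p x - q x) ∂ν = - ∫ x in s, (p x - q x) ∂ν := by
    have := integral_add_compl hs hd_int
    linarith [this.symm ▸ hd0, this]
  have habs1 : |∫ x in s, (p x - q x) ∂ν| ≤ ∫ x in s, |p x - q x| ∂ν := by
    simpa [Real.norm_eq_abs] using norm_integral_le_integral_norm (μ := ν.restrict s) (fun x => p x - q x)
  have habs2 : |∫ x in sᶜ, (p x - q x) ∂ν| ≤ ∫ x in sᶜ, |p x - q x| ∂ν := by
    simpa [Real.norm_eq_abs] using norm_integral_le_integral_norm (μ := ν.restrict sᶜ) (fun x => p x - q x)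
  have hsplit : ∫ x in s, |p x - q x| ∂ν + ∫ x in sᶜ, |p x - q x| ∂ν = ∫ x, |p x - q x| ∂ν :=
    integral_add_compl hs hd_int.abs
  have h2a : 2 * |(P s).toReal - (Q s).toReal| ≤ ∫ x, |p x - q x| ∂ν := by
    rw [hsub]
    have : |∫ x in sᶜ, (p x - q x) ∂ν| = |∫ x in s, (p x - q x) ∂ν| := by rw [hcompl, abs_neg]
    linarith [habs1, habs2, this]
  linarith [key2, h2a]

lemma mixFinset_apply_toReal {k : ℕ} (t : Finset (Fin k)) (w : Fin k → ℝ)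
    (hw : ∀ i, 0 ≤ w i) (F : Fin k → Measure 𝒳) [∀ i, IsFiniteMeasure (F i)]
    (s : Set 𝒳) :
    ((∑ i ∈ t, ENNReal.ofReal (w i) • F i) s).toReal = ∑ i ∈ t, w i * (F i s).toReal := by
  rw [Measure.finset_sum_apply, ENNReal.toReal_sum]
  · refine Finset.sum_congr rfl fun i _ => ?_
    rw [Measure.smul_apply, smul_eq_mul, ENNReal.toReal_mul, ENNReal.toReal_ofReal (hw i)]
  · intro i _
    rw [Measure.smul_apply, smul_eq_mul]
    exact ENNReal.mul_ne_top ENNReal.ofReal_ne_top (measure_ne_top _ _)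

lemma isProbabilityMeasure_mixFinset {k : ℕ} (t : Finset (Fin k)) (w : Fin k → ℝ)
    (hw : ∀ i, 0 ≤ w i) (hsum : ∑ i ∈ t, w i = 1) (F : Fin k → Measure 𝒳)
    [∀ i, IsProbabilityMeasure (F i)] :
    IsProbabilityMeasure (∑ i ∈ t, ENNReal.ofReal (w i) • F i) := by
  constructor
  rw [Measure.finset_sum_apply]
  simp only [Measure.smul_apply, smul_eq_mul, measure_univ, mul_one]
  rw [← ENNReal.ofReal_sum_of_nonneg (fun i _ => hw i), hsum, ENNReal.ofReal_one]

lemma abs_sub_le_tvDist (P Q : Measure 𝒳) [IsProbabilityMeasure P] [IsProbabilityMeasure Q]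
    (s : Set 𝒳) (hs : MeasurableSet s) : |(P s).toReal - (Q s).toReal| ≤ tvDist P Q := by
  have hb : BddAbove (Set.range fun t : { t : Set 𝒳 // MeasurableSet t } =>
      |(P t.1).toReal - (Q t.1).toReal|) := by
    refine ⟨2, ?_⟩
    rintro x ⟨t, rfl⟩
    have h1 : (P t.1).toReal ≤ 1 := by
      simpa using ENNReal.toReal_mono (by simp) (prob_le_one (μ := P) (s := t.1))
    have h2 : (Q t.1).toReal ≤ 1 := by
      simpa using ENNReal.toReal_mono (by simp) (prob_le_one (μ := Q) (s := t.1))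
    have h3 : (0:ℝ) ≤ (P t.1).toReal := ENNReal.toReal_nonneg
    have h4 : (0:ℝ) ≤ (Q t.1).toReal := ENNReal.toReal_nonneg
    exact abs_le.mpr ⟨by linarith, by linarith⟩
  exact le_ciSup hb ⟨s, hs⟩

theorem deltastar_tv {k : ℕ} (hk : 2 ≤ k)
    (F : Fin k → Measure 𝒳) [∀ i, IsProbabilityMeasure (F i)]
    (β β' : Fin k → ℝ) (hβ : β ∈ stdSimplex ℝ (Fin k)) (hβ' : β' ∈ stdSimplex ℝ (Fin k))
    (hne : β ≠ β') :
    Δstar F * ((∑ i, |β i - β' i|) / 2) ≤ tvDist (mix β F) (mix β' F) := by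
  classical
  set d : Fin k → ℝ := fun i => β i - β' i with hd
  have hsum0 : ∑ i, d i = 0 := by
    rw [hd]; rw [Finset.sum_sub_distrib, hβ.2, hβ'.2]; ring
  set I : Finset (Fin k) := Finset.univ.filter (fun i => 0 < d i) with hI
  have hmemI : ∀ i, i ∈ I ↔ 0 < d i := fun i => by simp [hI]
  have hmemIc : ∀ i, i ∈ Iᶜ ↔ d i ≤ 0 := fun i => by simp [hI, not_lt]
  have hI_ne : I.Nonempty := by
    by_contra h
    rw [Finset.not_nonempty_iff_eq_empty] at h
    have hle : ∀ i ∈ Finset.univ, d i ≤ 0 := by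
      intro i _
      by_contra hlt
      have : i ∈ I := (hmemI i).mpr (lt_of_not_ge hlt)
      simp [h] at this
    have := (Finset.sum_eq_zero_iff_of_nonpos hle).mp hsum0
    apply hne
    funext i
    have := this i (Finset.mem_univ i)
    simp [hd] at this
    linarith
  have hI_ne_univ : I ≠ Finset.univ := by
    intro h
    have hpos : ∀ i ∈ Finset.univ, 0 < d i := fun i _ => (hmemI i).mp (h ▸ Finset.mem_univ i)
    have huniv_ne : (Finset.univ : Finset (Fin k)).Nonempty := by
      have : Nonempty (Fin k) := ⟨⟨0, by omega⟩⟩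
      exact Finset.univ_nonempty
    have := Finset.sum_pos hpos huniv_ne
    linarith [hsum0]
  set c : ℝ := ∑ i ∈ I, d i with hc
  have hc_pos : 0 < c := Finset.sum_pos (fun i hi => (hmemI i).mp hi) hI_ne
  have hsplit : c + ∑ i ∈ Iᶜ, d i = 0 := by
    rw [hc, Finset.sum_add_sum_compl]; exact hsum0
  have habs : ∑ i, |d i| = 2 * c := by
    rw [← Finset.sum_add_sum_compl I (fun i => |d i|)]
    have e1 : ∑ i ∈ I, |d i| = c := by
      rw [hc]; exact Finset.sum_congr rfl fun i hi => abs_of_pos ((hmemI i).mp hi)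
    have e2 : ∑ i ∈ Iᶜ, |d i| = c := by
      have : ∑ i ∈ Iᶜ, |d i| = ∑ i ∈ Iᶜ, (-(d i)) :=
        Finset.sum_congr rfl fun i hi => abs_of_nonpos ((hmemIc i).mp hi)
      rw [this, Finset.sum_neg_distrib]
      linarith [hsplit]
    rw [e1, e2]; ring
  set γ : Fin k → ℝ := fun i => if i ∈ I then d i / c else 0 with hγ
  set l : Fin k → ℝ := fun i => if i ∈ I then 0 else (-(d i)) / c with hl
  have hγ0 : ∀ i, 0 ≤ γ i := by
    intro i; rw [hγ]; dsimp only
    split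
    · exact div_nonneg (le_of_lt ((hmemI i).mp (by assumption))) hc_pos.le
    · exact le_refl 0
  have hl0 : ∀ i, 0 ≤ l i := by
    intro i; rw [hl]; dsimp only
    split
    · exact le_refl 0
    · refine div_nonneg ?_ hc_pos.le
      have : d i ≤ 0 := (hmemIc i).mp (Finset.mem_compl.mpr (by assumption))
      linarith
  have hγsum : ∑ i ∈ I, γ i = 1 := by
    have : ∑ i ∈ I, γ i = ∑ i ∈ I, d i / c :=
      Finset.sum_congr rfl fun i hi => by rw [hγ]; simp [hi]
    rw [this, ← Finset.sum_div, ← hc, div_self hc_pos.ne']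
  have hlsum : ∑ i ∈ Iᶜ, l i = 1 := by
    have : ∑ i ∈ Iᶜ, l i = ∑ i ∈ Iᶜ, (-(d i)) / c :=
      Finset.sum_congr rfl fun i hi => by
        rw [hl]; simp [Finset.mem_compl.mp hi]
    rw [this, ← Finset.sum_div, Finset.sum_neg_distrib]
    rw [show -∑ i ∈ Iᶜ, d i = c by linarith [hsplit], div_self hc_pos.ne']
  set A : Measure 𝒳 := ∑ i ∈ I, ENNReal.ofReal (γ i) • F i with hA
  set B : Measure 𝒳 := ∑ i ∈ Iᶜ, ENNReal.ofReal (l i) • F i with hB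
  haveI : IsProbabilityMeasure A := isProbabilityMeasure_mixFinset I γ hγ0 hγsum F
  haveI : IsProbabilityMeasure B := isProbabilityMeasure_mixFinset Iᶜ l hl0 hlsum F
  haveI : IsProbabilityMeasure (mix β F) :=
    isProbabilityMeasure_mixFinset Finset.univ β (fun i => hβ.1 i) hβ.2 F
  haveI : IsProbabilityMeasure (mix β' F) :=
    isProbabilityMeasure_mixFinset Finset.univ β' (fun i => hβ'.1 i) hβ'.2 F
  -- key pointwise identity
  have key : ∀ s : Set 𝒳,
      (mix β F s).toReal - (mix β' F s).toReal = c * ((A s).toReal - (B s).toReal) := by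
    intro s
    have h1 : (mix β F s).toReal = ∑ i, β i * (F i s).toReal :=
      mixFinset_apply_toReal Finset.univ β (fun i => hβ.1 i) F s
    have h2 : (mix β' F s).toReal = ∑ i, β' i * (F i s).toReal :=
      mixFinset_apply_toReal Finset.univ β' (fun i => hβ'.1 i) F s
    have h3 : (A s).toReal = ∑ i ∈ I, γ i * (F i s).toReal :=
      mixFinset_apply_toReal I γ hγ0 F s
    have h4 : (B s).toReal = ∑ i ∈ Iᶜ, l i * (F i s).toReal :=
      mixFinset_apply_toReal Iᶜ l hl0 F s
    rw [h1, h2, h3, h4]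
    have e0 : ∑ i, β i * (F i s).toReal - ∑ i, β' i * (F i s).toReal
        = ∑ i, d i * (F i s).toReal := by
      rw [← Finset.sum_sub_distrib]
      exact Finset.sum_congr rfl fun i _ => by rw [hd]; ring
    have eA : c * ∑ i ∈ I, γ i * (F i s).toReal = ∑ i ∈ I, d i * (F i s).toReal := by
      rw [Finset.mul_sum]
      refine Finset.sum_congr rfl fun i hi => ?_
      rw [hγ]; simp only [if_pos hi]
      field_simp
    have eB : c * ∑ i ∈ Iᶜ, l i * (F i s).toReal = - ∑ i ∈ Iᶜ, d i * (F i s).toReal := by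
      rw [Finset.mul_sum, ← Finset.sum_neg_distrib]
      refine Finset.sum_congr rfl fun i hi => ?_
      rw [hl]; simp only [if_neg (Finset.mem_compl.mp hi)]
      field_simp
    rw [e0, mul_sub, eA, eB, ← Finset.sum_add_sum_compl I (fun i => d i * (F i s).toReal)]
    ring
  -- Δstar ≤ tvDist A B
  have step1 : Δstar F ≤ tvDist A B := by
    refine le_trans (ciInf_le ⟨0, ?_⟩ (⟨I, hI_ne, hI_ne_univ⟩ :
        { I : Finset (Fin k) // I.Nonempty ∧ I ≠ Finset.univ })) ?_
    · rintro x ⟨J, rfl⟩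
      exact Real.iInf_nonneg fun _ => Real.iInf_nonneg fun _ => tvDist_nonneg _ _
    refine le_trans (ciInf_le ⟨0, ?_⟩ (⟨γ, hγ0, hγsum⟩ :
        { g : Fin k → ℝ // (∀ i, 0 ≤ g i) ∧ ∑ i ∈ I, g i = 1 })) ?_
    · rintro x ⟨g, rfl⟩
      exact Real.iInf_nonneg fun _ => tvDist_nonneg _ _
    exact ciInf_le ⟨0, by rintro x ⟨g, rfl⟩; exact tvDist_nonneg _ _⟩
      (⟨l, hl0, hlsum⟩ : { g : Fin k → ℝ // (∀ i, 0 ≤ g i) ∧ ∑ i ∈ Iᶜ, g i = 1 })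
  -- c * tvDist A B ≤ tvDist (mix β F) (mix β' F)
  have step2 : c * tvDist A B ≤ tvDist (mix β F) (mix β' F) := by
    rw [mul_comm, ← le_div_iff₀ hc_pos]
    refine Real.iSup_le (fun s => ?_) (div_nonneg (tvDist_nonneg _ _) hc_pos.le)
    have : |(A s.1).toReal - (B s.1).toReal|
        = |(mix β F s.1).toReal - (mix β' F s.1).toReal| / c := by
      rw [key s.1, abs_mul, abs_of_pos hc_pos]
      field_simp
    rw [this]
    gcongr
    exact abs_sub_le_tvDist (mix β F) (mix β' F) s.1 s.2
  have habs' : ∑ i, |β i - β' i| = 2 * c := by simp only [hd] at habs; exact habs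
  calc Δstar F * ((∑ i, |β i - β' i|) / 2)
      = Δstar F * c := by rw [habs']; ring
    _ ≤ tvDist A B * c := mul_le_mul_of_nonneg_right step1 hc_pos.le
    _ = c * tvDist A B := mul_comm _ _
    _ ≤ tvDist (mix β F) (mix β' F) := step2

-- STATEMENT 1
theorem statement1 {k : ℕ} (hk : 2 ≤ k)
    (F : Fin k → Measure 𝒳) [∀ i, IsProbabilityMeasure (F i)]
    (β β' : Fin k → ℝ) (hβ : β ∈ stdSimplex ℝ (Fin k)) (hβ' : β' ∈ stdSimplex ℝ (Fin k)) :
    Δstar F / (2 * Real.sqrt 2) * ∑ i, |β i - β' i| ≤ hellinger (mix β F) (mix β' F) := by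
  classical
  by_cases hne : β = β'
  · have hz : ∑ i, |β i - β' i| = 0 := by simp [hne]
    rw [hz, mul_zero]
    exact Real.sqrt_nonneg _
  · haveI : IsProbabilityMeasure (mix β F) :=
      isProbabilityMeasure_mixFinset Finset.univ β (fun i => hβ.1 i) hβ.2 F
    haveI : IsProbabilityMeasure (mix β' F) :=
      isProbabilityMeasure_mixFinset Finset.univ β' (fun i => hβ'.1 i) hβ'.2 F
    have h1 := deltastar_tv hk F β β' hβ hβ' hne
    have h2 := tvDist_le_sqrt_two_mul_hellinger (mix β F) (mix β' F)
    have hs2 : (0:ℝ) < Real.sqrt 2 := by positivity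
    have key : Δstar F / (2 * Real.sqrt 2) * ∑ i, |β i - β' i|
        = (Δstar F * ((∑ i, |β i - β' i|) / 2)) / Real.sqrt 2 := by
      field_simp
    rw [key, div_le_iff₀ hs2]
    calc Δstar F * ((∑ i, |β i - β' i|) / 2)
        ≤ tvDist (mix β F) (mix β' F) := h1
      _ ≤ Real.sqrt 2 * hellinger (mix β F) (mix β' F) := h2
      _ = hellinger (mix β F) (mix β' F) * Real.sqrt 2 := mul_comm _ _

end
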